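/- Let f, g : ℝ² → ℝ be measurable. Then for all s, t > 0 one has (f+g)**(s,t) ≤ 4 (f**(s,t) + g**(s,t)). -/

import Mathlib

open MeasureTheory ENNReal Set

noncomputable section

/-- Decreasing rearrangement of an `ℝ≥0∞`-valued function on `ℝ` (w.r.t. Lebesgue measure):
`h*(t) = inf {σ : |{x : σ < h x}| ≤ t}`. -/
def rearrE (h : ℝ → ℝ≥0∞) (t : ℝ) : ℝ≥0∞ :=
  sInf {σ : ℝ≥0∞ | volume {x : ℝ | σ < h x} ≤ ENNReal.ofReal t}

/-- Decreasing rearrangement of a real-valued function on `ℝ`. -/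
def rearr (h : ℝ → ℝ) (t : ℝ) : ℝ≥0∞ :=
  rearrE (fun x => ENNReal.ofReal |h x|) t

/-- `f*_y(x,t)`: rearrangement in the second variable. -/
def rearrY (f : ℝ × ℝ → ℝ) (x t : ℝ) : ℝ≥0∞ := rearr (fun y => f (x, y)) t

/-- `f*_x(s,y)`: rearrangement in the first variable. -/
def rearrX (f : ℝ × ℝ → ℝ) (s y : ℝ) : ℝ≥0∞ := rearr (fun x => f (x, y)) s

/-- The multivariate rearrangement `f*_{yx}(s,t) = (x ↦ f*_y(x,t))*(s)`. -/
def rearrYX (f : ℝ × ℝ → ℝ) (s t : ℝ) : ℝ≥0∞ := rearrE (fun x => rearrY f x t) s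

/-- `f**_{yx}(s,t) = (1/s)∫_0^s (x ↦ (1/t)∫_0^t f*_y(x,τ) dτ)*(σ) dσ`. -/
def starstarYX (f : ℝ × ℝ → ℝ) (s t : ℝ) : ℝ≥0∞ :=
  (ENNReal.ofReal s)⁻¹ *
    ∫⁻ σ in Ioo (0:ℝ) s,
      rearrE (fun x => (ENNReal.ofReal t)⁻¹ * ∫⁻ τ in Ioo (0:ℝ) t, rearrY f x τ) σ

/-- `f**(s,t) = (1/(st))∫_0^s∫_0^t f*_{yx}(σ,τ) dσ dτ`. -/
def starstar (f : ℝ × ℝ → ℝ) (s t : ℝ) : ℝ≥0∞ :=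
  (ENNReal.ofReal (s * t))⁻¹ * ∫⁻ σ in Ioo (0:ℝ) s, ∫⁻ τ in Ioo (0:ℝ) t, rearrYX f σ τ

/-- Decreasing rearrangement of `f : ℝ² → ℝ` w.r.t. two-dimensional Lebesgue measure. -/
def rearr2 (f : ℝ × ℝ → ℝ) (θ : ℝ) : ℝ≥0∞ :=
  sInf {σ : ℝ≥0∞ | volume {z : ℝ × ℝ | σ < ENNReal.ofReal |f z|} ≤ ENNReal.ofReal θ}

/-- A weight on `ℝ₊`: nonnegative and locally integrable. -/
def IsWeight (u : ℝ → ℝ) : Prop :=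
  (∀ x, 0 ≤ u x) ∧ LocallyIntegrableOn u (Ioi 0)

/-- A weight on `ℝ²₊`: nonnegative and locally integrable. -/
def IsWeight2 (w : ℝ × ℝ → ℝ) : Prop :=
  (∀ z, 0 ≤ w z) ∧ LocallyIntegrableOn w (Ioi 0 ×ˢ Ioi 0)

/-- `‖g‖_{Λ^p(u)}` for `g : ℝ → ℝ`. -/
def lamNorm (p : ℝ) (u : ℝ → ℝ) (g : ℝ → ℝ) : ℝ≥0∞ :=
  (∫⁻ t in Ioi (0:ℝ), (rearr g t) ^ p * ENNReal.ofReal (u t)) ^ (1 / p)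

/-- `‖f‖_{Λ₂^p(w)}` for `f : ℝ² → ℝ` and a weight `w` on `ℝ²₊`. -/
def lam2Norm (p : ℝ) (w : ℝ × ℝ → ℝ) (f : ℝ × ℝ → ℝ) : ℝ≥0∞ :=
  (∫⁻ s in Ioi (0:ℝ), ∫⁻ t in Ioi (0:ℝ),
      (rearrYX f s t) ^ p * ENNReal.ofReal (w (s, t))) ^ (1 / p)

/-- `‖f‖_{Λ^p(ℝ²,u)}`, by means of the 2D rearrangement. -/
def lamR2Norm (p : ℝ) (u : ℝ → ℝ) (f : ℝ × ℝ → ℝ) : ℝ≥0∞ :=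
  (∫⁻ θ in Ioi (0:ℝ), (rearr2 f θ) ^ p * ENNReal.ofReal (u θ)) ^ (1 / p)

/-- The mixed Lorentz quasinorm `‖f‖_{Λ^p(u)[Λ^p(v)]}`. -/
def mixedNorm (p : ℝ) (u v : ℝ → ℝ) (f : ℝ × ℝ → ℝ) : ℝ≥0∞ :=
  (∫⁻ s in Ioi (0:ℝ),
      rearrE (fun x => ∫⁻ t in Ioi (0:ℝ), (rearrY f x t) ^ p * ENNReal.ofReal (v t)) s *
        ENNReal.ofReal (u s)) ^ (1 / p)

/-- The mixed Lorentz quasinorm with the order of the variables reversed,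
`‖f‖_{Λ^p(v)[Λ^p(u)]}`. -/
def mixedNormRev (p : ℝ) (v u : ℝ → ℝ) (f : ℝ × ℝ → ℝ) : ℝ≥0∞ :=
  (∫⁻ t in Ioi (0:ℝ),
      rearrE (fun y => ∫⁻ s in Ioi (0:ℝ), (rearrX f s y) ^ p * ENNReal.ofReal (u s)) t *
        ENNReal.ofReal (v t)) ^ (1 / p)

/-- The `B_p` condition for a weight on `ℝ₊`. -/
def Bp (p : ℝ) (v : ℝ → ℝ) : Prop :=
  ∃ C : ℝ, 0 < C ∧ ∀ r : ℝ, 0 < r →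
    ENNReal.ofReal (r ^ p) * ∫⁻ x in Ioi r, ENNReal.ofReal (v x / x ^ p) ≤
      ENNReal.ofReal C * ∫⁻ x in Ioo (0:ℝ) r, ENNReal.ofReal (v x)

/-- Two-dimensional Hardy operator acting on `ℝ≥0∞`-valued functions. -/
def S2E (g : ℝ × ℝ → ℝ≥0∞) (s t : ℝ) : ℝ≥0∞ :=
  (ENNReal.ofReal (s * t))⁻¹ * ∫⁻ σ in Ioo (0:ℝ) s, ∫⁻ τ in Ioo (0:ℝ) t, g (σ, τ)

/-- Nonincreasing in each variable on `ℝ²₊`. -/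
def BiAntitone (g : ℝ × ℝ → ℝ≥0∞) : Prop :=
  ∀ s s' t t' : ℝ, 0 < s' → s' ≤ s → 0 < t' → t' ≤ t → g (s, t) ≤ g (s', t')

/-- The class `B_p^{(2)}`: the two-dimensional Hardy operator is bounded on the cone of
nonnegative functions nonincreasing in each variable in `L^p(ℝ²₊, w)`. -/
def Bp2 (p : ℝ) (w : ℝ × ℝ → ℝ) : Prop :=
  ∃ C : ℝ, 0 < C ∧ ∀ g : ℝ × ℝ → ℝ≥0∞, Measurable g → BiAntitone g →
    (∫⁻ s in Ioi (0:ℝ), ∫⁻ t in Ioi (0:ℝ), (S2E g s t) ^ p * ENNReal.ofReal (w (s, t))) ≤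
      ENNReal.ofReal C *
        ∫⁻ s in Ioi (0:ℝ), ∫⁻ t in Ioi (0:ℝ), (g (s, t)) ^ p * ENNReal.ofReal (w (s, t))

/-- A decreasing subset of `ℝ²₊`. -/
def DecreasingSet (D : Set (ℝ × ℝ)) : Prop :=
  MeasurableSet D ∧ D ⊆ Ioi 0 ×ˢ Ioi 0 ∧
    ∀ s t s' t' : ℝ, (s, t) ∈ D → 0 < s' → s' ≤ s → 0 < t' → t' ≤ t → (s', t') ∈ D

/-- `w(E) = ∫_E w`. -/
def wMeas (w : ℝ × ℝ → ℝ) (E : Set (ℝ × ℝ)) : ℝ≥0∞ := ∫⁻ z in E, ENNReal.ofReal (w z)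

/-- `U(m) = ∫_0^m u(θ) dθ`, for `m ∈ [0,∞]`. -/
def Uof (u : ℝ → ℝ) (m : ℝ≥0∞) : ℝ≥0∞ :=
  ∫⁻ θ in {θ : ℝ | 0 < θ ∧ ENNReal.ofReal θ < m}, ENNReal.ofReal (u θ)

/-- A covering family of `ℝ²₊`: an increasing sequence of decreasing sets covering `ℝ²₊`. -/
def CoveringFamily (D : ℕ → Set (ℝ × ℝ)) : Prop :=
  (∀ k, DecreasingSet (D k)) ∧ Monotone D ∧ (⋃ k, D k) = Ioi 0 ×ˢ Ioi 0

end


section Aux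

open MeasureTheory ENNReal Set

/-- Monotonicity of `rearrE` in the function. -/
lemma rearrE_mono {h h' : ℝ → ℝ≥0∞} (hh : ∀ x, h x ≤ h' x) (t : ℝ) :
    rearrE h t ≤ rearrE h' t := by
  apply sInf_le_sInf
  intro σ hσ
  exact le_trans (measure_mono fun x hx => lt_of_lt_of_le hx (hh x)) hσ

/-- `rearrE h` is nonincreasing. -/
lemma rearrE_anti (h : ℝ → ℝ≥0∞) : Antitone (rearrE h) := by
  intro t t' htt'
  apply sInf_le_sInf
  intro σ hσ
  exact le_trans hσ (ENNReal.ofReal_le_ofReal htt')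

/-- Subadditivity of `rearrE`. -/
lemma rearrE_add_le (h1 h2 : ℝ → ℝ≥0∞) {t1 t2 : ℝ} (ht1 : 0 ≤ t1) (ht2 : 0 ≤ t2) :
    rearrE (fun x => h1 x + h2 x) (t1 + t2) ≤ rearrE h1 t1 + rearrE h2 t2 := by
  unfold rearrE
  rw [ENNReal.sInf_add]
  refine le_iInf₂ fun σ1 hσ1 => ?_
  rw [add_comm σ1, ENNReal.sInf_add]
  refine le_iInf₂ fun σ2 hσ2 => ?_
  refine sInf_le ?_
  have hsub : {x : ℝ | σ2 + σ1 < h1 x + h2 x}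
      ⊆ {x : ℝ | σ1 < h1 x} ∪ {x : ℝ | σ2 < h2 x} := by
    intro x hx
    by_contra hc
    simp only [mem_union, mem_setOf_eq, not_or, not_lt] at hc
    exact absurd (show σ2 + σ1 < h1 x + h2 x from hx)
      (not_lt.2 (by rw [add_comm σ2 σ1]; exact add_le_add hc.1 hc.2))
  calc volume {x : ℝ | σ2 + σ1 < h1 x + h2 x}
      ≤ volume ({x : ℝ | σ1 < h1 x} ∪ {x : ℝ | σ2 < h2 x}) := measure_mono hsub
    _ ≤ volume {x : ℝ | σ1 < h1 x} + volume {x : ℝ | σ2 < h2 x} := measure_union_le _ _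
    _ ≤ ENNReal.ofReal t1 + ENNReal.ofReal t2 := add_le_add hσ1 hσ2
    _ = ENNReal.ofReal (t1 + t2) := (ENNReal.ofReal_add ht1 ht2).symm

/-- Subadditivity of the one-dimensional rearrangement. -/
lemma rearr_add_le (a b : ℝ → ℝ) {t1 t2 : ℝ} (ht1 : 0 ≤ t1) (ht2 : 0 ≤ t2) :
    rearr (fun y => a y + b y) (t1 + t2) ≤ rearr a t1 + rearr b t2 := by
  refine le_trans (rearrE_mono (fun y => ?_) _) (rearrE_add_le _ _ ht1 ht2)
  calc ENNReal.ofReal |a y + b y| ≤ ENNReal.ofReal (|a y| + |b y|) :=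
        ENNReal.ofReal_le_ofReal (abs_add_le _ _)
    _ = ENNReal.ofReal |a y| + ENNReal.ofReal |b y| :=
        ENNReal.ofReal_add (abs_nonneg _) (abs_nonneg _)

/-- Subadditivity of the multivariate rearrangement. -/
lemma rearrYX_add_le (f g : ℝ × ℝ → ℝ) {s1 s2 t1 t2 : ℝ}
    (hs1 : 0 ≤ s1) (hs2 : 0 ≤ s2) (ht1 : 0 ≤ t1) (ht2 : 0 ≤ t2) :
    rearrYX (f + g) (s1 + s2) (t1 + t2) ≤ rearrYX f s1 t1 + rearrYX g s2 t2 := by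
  refine le_trans (rearrE_mono (fun x => ?_) _) (rearrE_add_le _ _ hs1 hs2)
  exact rearr_add_le (fun y => f (x, y)) (fun y => g (x, y)) ht1 ht2

lemma anti_rearrYX_right (f : ℝ × ℝ → ℝ) (σ : ℝ) :
    Antitone (fun τ => rearrYX f σ τ) := by
  intro τ τ' h
  exact rearrE_mono (fun x => rearrE_anti _ h) σ

lemma anti_rearrYX_left (f : ℝ × ℝ → ℝ) (τ : ℝ) :
    Antitone (fun σ => rearrYX f σ τ) :=
  fun _ _ h => rearrE_anti _ h

/-- Change of variables `σ ↦ σ/2` for a lower Lebesgue integral on `(0, s)`. -/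
lemma lintegral_Ioo_half (F : ℝ → ℝ≥0∞) (hF : Measurable F) (s : ℝ) :
    ∫⁻ σ in Ioo (0:ℝ) s, F (σ / 2) = 2 * ∫⁻ σ in Ioo (0:ℝ) (s / 2), F σ := by
  have hhalf : Measurable fun σ : ℝ => (2:ℝ)⁻¹ * σ := measurable_const_mul _
  have hpre : ((2:ℝ)⁻¹ * ·) ⁻¹' Ioo (0:ℝ) (s / 2) = Ioo (0:ℝ) s := by
    ext x
    simp only [mem_preimage, mem_Ioo]
    constructor
    · rintro ⟨h1, h2⟩; constructor <;> linarith
    · rintro ⟨h1, h2⟩; constructor <;> linarith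
  have h1 : ∫⁻ σ in Ioo (0:ℝ) s, F (σ / 2)
      = ∫⁻ y, F y ∂((volume.restrict (Ioo (0:ℝ) s)).map ((2:ℝ)⁻¹ * ·)) := by
    rw [lintegral_map hF hhalf]
    simp_rw [div_eq_inv_mul]
  have h2 : (volume.restrict (Ioo (0:ℝ) s)).map ((2:ℝ)⁻¹ * ·)
      = ((2:ℝ≥0∞)) • volume.restrict (Ioo (0:ℝ) (s / 2)) := by
    rw [← hpre, ← Measure.restrict_map hhalf measurableSet_Ioo,
      Real.map_volume_mul_left (by norm_num : ((2:ℝ)⁻¹) ≠ 0)]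
    rw [Measure.restrict_smul]
    norm_num
  rw [h1, h2, lintegral_smul_measure, smul_eq_mul]

end Aux

/-- `(f+g)**(s,t) ≤ 4 (f**(s,t) + g**(s,t))`. -/
theorem starstar_quasi_subadditive (f g : ℝ × ℝ → ℝ) (hf : Measurable f) (hg : Measurable g) :
    ∀ s t : ℝ, 0 < s → 0 < t →
      starstar (f + g) s t ≤ 4 * (starstar f s t + starstar g s t) := by
  intro s t hs ht
  -- measurability helpers
  have mf2 : ∀ σ : ℝ, Measurable fun τ : ℝ => rearrYX f σ (τ / 2) :=
    fun σ => ((anti_rearrYX_right f σ).comp_monotone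
      (monotone_id.div_const (by norm_num : (0:ℝ) ≤ 2))).measurable
  have mg2 : ∀ σ : ℝ, Measurable fun τ : ℝ => rearrYX g σ (τ / 2) :=
    fun σ => ((anti_rearrYX_right g σ).comp_monotone
      (monotone_id.div_const (by norm_num : (0:ℝ) ≤ 2))).measurable
  have mfR : ∀ σ : ℝ, Measurable fun τ : ℝ => rearrYX f σ τ :=
    fun σ => (anti_rearrYX_right f σ).measurable
  have mgR : ∀ σ : ℝ, Measurable fun τ : ℝ => rearrYX g σ τ :=
    fun σ => (anti_rearrYX_right g σ).measurable
  -- the outer functions, antitone in σ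
  set Gf : ℝ → ℝ≥0∞ := fun σ => ∫⁻ τ in Ioo (0:ℝ) (t / 2), rearrYX f σ τ with hGf
  set Gg : ℝ → ℝ≥0∞ := fun σ => ∫⁻ τ in Ioo (0:ℝ) (t / 2), rearrYX g σ τ with hGg
  have antiGf : Antitone Gf := fun σ σ' h =>
    lintegral_mono fun τ => anti_rearrYX_left f τ h
  have antiGg : Antitone Gg := fun σ σ' h =>
    lintegral_mono fun τ => anti_rearrYX_left g τ h
  have mGf : Measurable Gf := antiGf.measurable
  have mGg : Measurable Gg := antiGg.measurable
  -- step 1: pointwise bound on inner integral for σ ∈ (0,s)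
  have step1 : ∫⁻ σ in Ioo (0:ℝ) s, ∫⁻ τ in Ioo (0:ℝ) t, rearrYX (f + g) σ τ
      ≤ ∫⁻ σ in Ioo (0:ℝ) s, (2 * Gf (σ / 2) + 2 * Gg (σ / 2)) := by
    refine setLIntegral_mono (by fun_prop) fun σ hσ => ?_
    have hσ0 : (0:ℝ) ≤ σ / 2 := by have := hσ.1; linarith
    calc ∫⁻ τ in Ioo (0:ℝ) t, rearrYX (f + g) σ τ
        ≤ ∫⁻ τ in Ioo (0:ℝ) t, (rearrYX f (σ / 2) (τ / 2) + rearrYX g (σ / 2) (τ / 2)) := by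
          refine setLIntegral_mono (by fun_prop) fun τ hτ => ?_
          have hτ0 : (0:ℝ) ≤ τ / 2 := by have := hτ.1; linarith
          have hσe : σ = σ / 2 + σ / 2 := by ring
          have hτe : τ = τ / 2 + τ / 2 := by ring
          have h := rearrYX_add_le f g hσ0 hσ0 hτ0 hτ0
          rw [← hσe, ← hτe] at h
          exact h
      _ = (∫⁻ τ in Ioo (0:ℝ) t, rearrYX f (σ / 2) (τ / 2))
            + ∫⁻ τ in Ioo (0:ℝ) t, rearrYX g (σ / 2) (τ / 2) :=
          lintegral_add_left (mf2 _) _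
      _ = 2 * Gf (σ / 2) + 2 * Gg (σ / 2) := by
          rw [hGf, hGg]
          rw [lintegral_Ioo_half _ (mfR (σ / 2)) t, lintegral_Ioo_half _ (mgR (σ / 2)) t]
  -- step 2: split and rescale the outer integral
  have step2 : ∫⁻ σ in Ioo (0:ℝ) s, (2 * Gf (σ / 2) + 2 * Gg (σ / 2))
      = 4 * ((∫⁻ σ in Ioo (0:ℝ) (s / 2), Gf σ) + ∫⁻ σ in Ioo (0:ℝ) (s / 2), Gg σ) := by
    rw [lintegral_add_left (by fun_prop)]
    have e1 : ∫⁻ σ in Ioo (0:ℝ) s, 2 * Gf (σ / 2)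
        = 2 * ∫⁻ σ in Ioo (0:ℝ) s, Gf (σ / 2) := lintegral_const_mul _ (by fun_prop)
    have e2 : ∫⁻ σ in Ioo (0:ℝ) s, 2 * Gg (σ / 2)
        = 2 * ∫⁻ σ in Ioo (0:ℝ) s, Gg (σ / 2) := lintegral_const_mul _ (by fun_prop)
    rw [e1, e2, lintegral_Ioo_half _ mGf s, lintegral_Ioo_half _ mGg s]
    ring
  -- step 3: enlarge domains back to (0,s)×(0,t)
  have hsub_s : Ioo (0:ℝ) (s / 2) ⊆ Ioo (0:ℝ) s := Ioo_subset_Ioo le_rfl (by linarith)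
  have hsub_t : Ioo (0:ℝ) (t / 2) ⊆ Ioo (0:ℝ) t := Ioo_subset_Ioo le_rfl (by linarith)
  have step3f : (∫⁻ σ in Ioo (0:ℝ) (s / 2), Gf σ)
      ≤ ∫⁻ σ in Ioo (0:ℝ) s, ∫⁻ τ in Ioo (0:ℝ) t, rearrYX f σ τ := by
    refine le_trans (lintegral_mono_set hsub_s) (lintegral_mono fun σ => ?_)
    exact lintegral_mono_set hsub_t
  have step3g : (∫⁻ σ in Ioo (0:ℝ) (s / 2), Gg σ)
      ≤ ∫⁻ σ in Ioo (0:ℝ) s, ∫⁻ τ in Ioo (0:ℝ) t, rearrYX g σ τ := by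
    refine le_trans (lintegral_mono_set hsub_s) (lintegral_mono fun σ => ?_)
    exact lintegral_mono_set hsub_t
  -- conclusion
  unfold starstar
  set c : ℝ≥0∞ := (ENNReal.ofReal (s * t))⁻¹
  set If : ℝ≥0∞ := ∫⁻ σ in Ioo (0:ℝ) s, ∫⁻ τ in Ioo (0:ℝ) t, rearrYX f σ τ
  set Ig : ℝ≥0∞ := ∫⁻ σ in Ioo (0:ℝ) s, ∫⁻ τ in Ioo (0:ℝ) t, rearrYX g σ τ
  calc c * ∫⁻ σ in Ioo (0:ℝ) s, ∫⁻ τ in Ioo (0:ℝ) t, rearrYX (f + g) σ τ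
      ≤ c * (4 * (If + Ig)) := by
        refine mul_le_mul_right ?_ c
        refine le_trans step1 ?_
        rw [step2]
        exact mul_le_mul_right (add_le_add step3f step3g) 4
    _ = 4 * (c * If + c * Ig) := by ring
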